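/- Let Q be a unital quantale and (M, A) a Q-enriched category (1 ≤ M(a,a), M(a,b)*M(b,c) ≤ M(a,c)). Let σ : A → Q be a singleton with right adjoint σ* : A → Q, i.e. σ(b)*σ*(c) ≤ M(b,c) for all b,c and 1 ≤ ⨆_{a} σ*(a)*σ(a). Then for every presingleton τ : A → Q (i.e. M(a,b)*τ(b) ≤ τ(a)), the hom of the presingleton category is computed by composition with the right adjoint: ⨆ { f ∈ Q ∣ ∀ a, σ(a)*f ≤ τ(a) } = ⨆_{a∈A} σ*(a) * τ(a). -/

import Mathlib

/-- For a singleton `σ` (a left adjoint distributor with right adjoint `σs`) of a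
quantale-enriched category and any presingleton `τ`, the hom `P(σ, τ)` of the
presingleton category is computed by composition with the right adjoint:
`P(σ, τ) = σ* ∘ τ`. -/
theorem stmt_15 {Q : Type*} [Monoid Q] [CompleteLattice Q] [IsQuantale Q]
    {A : Type*} (M : A → A → Q)
    (hrefl : ∀ a, (1 : Q) ≤ M a a)
    (htrans : ∀ a b c, M a b * M b c ≤ M a c)
    (σ σs : A → Q)
    (hσ : ∀ a b, M a b * σ b ≤ σ a)
    (hσs : ∀ a b, σs a * M a b ≤ σs b)
    (hcounit : ∀ b c, σ b * σs c ≤ M b c)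
    (hunit : (1 : Q) ≤ ⨆ a : A, σs a * σ a)
    (τ : A → Q) (hτ : ∀ a b, M a b * τ b ≤ τ a) :
    sSup {f : Q | ∀ a, σ a * f ≤ τ a} = ⨆ a : A, σs a * τ a := by
  apply le_antisymm
  · apply sSup_le
    intro f hf
    calc f = 1 * f := (one_mul f).symm
      _ ≤ (⨆ a : A, σs a * σ a) * f := mul_le_mul_left hunit f
      _ = ⨆ a : A, σs a * σ a * f := Quantale.iSup_mul_distrib
      _ ≤ ⨆ a : A, σs a * τ a := by
          apply iSup_mono
          intro a
          rw [mul_assoc]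
          exact mul_le_mul_right (hf a) _
  · apply le_sSup
    intro a
    calc σ a * ⨆ b : A, σs b * τ b = ⨆ b : A, σ a * (σs b * τ b) :=
          Quantale.mul_iSup_distrib
      _ ≤ τ a := by
          apply iSup_le
          intro b
          rw [← mul_assoc]
          exact le_trans (mul_le_mul_left (hcounit a b) _) (hτ a b)
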